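/- Let R(z) ∈ ℤ[z] be a monic polynomial of even degree 2s with R(0) = 1 whose multiset of complex roots is closed under inversion (ξ a root implies ξ^{−1} a root with the same multiplicity), and such that 1 is not a root. Then the power series F(x) = Σ_{n≥1} n Π_{j=1}^{2s}(ξ_j^n − 1) x^n represents a rational function G(x) with integer coefficients satisfying G(x) = G(1/x). -/

import Mathlib

open Polynomial in
lemma sym_int (s : ℕ) (R : Polynomial ℤ) (hdeg : R.natDegree = 2 * s)
    (ξ : Fin (2 * s) → ℂ)
    (hroots : R.map (Int.castRingHom ℂ) =
      ∏ j : Fin (2 * s), (Polynomial.X - Polynomial.C (ξ j)))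
    (f : MvPolynomial (Fin (2 * s)) ℤ) (hf : f.IsSymmetric) :
    (MvPolynomial.aeval ξ) f ∈ Set.range (Int.cast : ℤ → ℂ) := by
  classical
  have hRC : ∀ k, ((R.coeff k : ℤ) : ℂ) = (R.map (Int.castRingHom ℂ)).coeff k := by
    intro k; simp [Polynomial.coeff_map]
  have hesymm : ∀ k : ℕ, k ≤ 2 * s →
      (MvPolynomial.aeval ξ) (MvPolynomial.esymm (Fin (2 * s)) ℤ k) ∈
        Set.range (Int.cast : ℤ → ℂ) := by
    intro k hk
    have hprod : (∏ j : Fin (2 * s), (Polynomial.X + Polynomial.C (-ξ j))) =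
        R.map (Int.castRingHom ℂ) := by
      rw [hroots]; simp [sub_eq_add_neg]
    have hv := Finset.prod_X_add_C_coeff (Finset.univ : Finset (Fin (2 * s)))
      (fun j => -ξ j) (k := 2 * s - k) (by simp [Nat.sub_le])
    rw [hprod] at hv
    have hcard : (Finset.univ : Finset (Fin (2 * s))).card = 2 * s := by simp
    rw [hcard] at hv
    have hsub : 2 * s - (2 * s - k) = k := by omega
    rw [hsub] at hv
    have heval : (MvPolynomial.aeval ξ) (MvPolynomial.esymm (Fin (2 * s)) ℤ k) =
        ∑ t ∈ Finset.powersetCard k (Finset.univ : Finset (Fin (2 * s))), ∏ i ∈ t, ξ i := by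
      simp [MvPolynomial.esymm, map_sum, map_prod]
    have hneg : ∀ t ∈ Finset.powersetCard k (Finset.univ : Finset (Fin (2 * s))),
        (∏ i ∈ t, (-ξ i)) = (-1 : ℂ) ^ k * ∏ i ∈ t, ξ i := by
      intro t ht
      calc ∏ i ∈ t, -ξ i = (∏ _i ∈ t, (-1 : ℂ)) * ∏ i ∈ t, ξ i := by
            rw [← Finset.prod_mul_distrib]; simp
        _ = (-1 : ℂ) ^ k * ∏ i ∈ t, ξ i := by
            rw [Finset.prod_const, (Finset.mem_powersetCard.mp ht).2]
    rw [Finset.sum_congr rfl hneg, ← Finset.mul_sum] at hv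
    refine ⟨(-1) ^ k * R.coeff (2 * s - k), ?_⟩
    rw [heval]
    push_cast
    rw [hRC, hv, ← mul_assoc, ← pow_add]
    rw [Even.neg_one_pow ⟨k, rfl⟩, one_mul]
  -- fundamental theorem
  obtain ⟨q, hq⟩ := MvPolynomial.esymmAlgHom_surjective (σ := Fin (2 * s)) ℤ
    (n := 2 * s) (by simp) ⟨f, hf⟩
  have hfval : f = (MvPolynomial.aeval
      (fun i : Fin (2 * s) => MvPolynomial.esymm (Fin (2 * s)) ℤ (i + 1))) q := by
    have := congrArg Subtype.val hq
    rw [MvPolynomial.esymmAlgHom_apply] at this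
    exact this.symm
  have hcomp : (MvPolynomial.aeval ξ) f =
      (MvPolynomial.aeval (fun i : Fin (2 * s) =>
        (MvPolynomial.aeval ξ) (MvPolynomial.esymm (Fin (2 * s)) ℤ (i + 1)))) q := by
    rw [hfval, ← MvPolynomial.comp_aeval_apply]
  rw [hcomp]
  clear hcomp hfval hq hf
  induction q using MvPolynomial.induction_on with
  | C a => exact ⟨a, by simp⟩
  | add p r hp hr =>
    rw [map_add]
    obtain ⟨a, ha⟩ := hp; obtain ⟨b, hb⟩ := hr
    exact ⟨a + b, by push_cast [← ha, ← hb]; ring⟩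
  | mul_X p i hp =>
    rw [map_mul, MvPolynomial.aeval_X]
    obtain ⟨a, ha⟩ := hp
    obtain ⟨b, hb⟩ := hesymm (i + 1) (by omega)
    exact ⟨a * b, by push_cast [← ha, ← hb]; ring⟩


noncomputable def eGen (s : ℕ) (T : Finset (Fin (2 * s))) : MvPolynomial (Fin (2 * s)) ℤ :=
  ∏ j ∈ T, MvPolynomial.X j

noncomputable def Qgen (s : ℕ) : Polynomial (MvPolynomial (Fin (2 * s)) ℤ) :=
  ∏ T : Finset (Fin (2 * s)), (1 - Polynomial.C (eGen s T) * Polynomial.X) ^ 2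

noncomputable def Pgen (s : ℕ) : Polynomial (MvPolynomial (Fin (2 * s)) ℤ) :=
  ∑ T : Finset (Fin (2 * s)),
    Polynomial.C (MvPolynomial.C ((-1) ^ (2 * s - T.card)) * eGen s T) * Polynomial.X *
      ∏ T' ∈ Finset.univ.erase T, (1 - Polynomial.C (eGen s T') * Polynomial.X) ^ 2

variable {s : ℕ}

lemma map_erase_eq (r : Equiv.Perm (Fin (2 * s))) (T : Finset (Fin (2 * s))) :
    (Finset.univ.erase T).map (Equiv.finsetCongr r).toEmbedding =
      Finset.univ.erase (T.map r.toEmbedding) := by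
  ext U
  simp only [Finset.mem_map, Finset.mem_erase, Finset.mem_univ, and_true,
    Equiv.finsetCongr_apply, Equiv.coe_toEmbedding]
  constructor
  · rintro ⟨V, hV, rfl⟩
    intro h
    exact hV (Finset.map_injective r.toEmbedding h)
  · intro hU
    refine ⟨U.map r.symm.toEmbedding, ?_, ?_⟩
    · intro h
      apply hU
      rw [← h]
      ext x
      simp [Finset.mem_map, Equiv.symm_apply_eq]
    · ext x
      simp [Finset.mem_map, Equiv.symm_apply_eq, eq_comm]

lemma rename_eGen (r : Equiv.Perm (Fin (2 * s))) (T : Finset (Fin (2 * s))) :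
    MvPolynomial.rename r (eGen s T) = eGen s (T.map r.toEmbedding) := by
  unfold eGen
  rw [map_prod, Finset.prod_map]
  simp [MvPolynomial.rename_X]

lemma card_map_emb (r : Equiv.Perm (Fin (2 * s))) (T : Finset (Fin (2 * s))) :
    (T.map r.toEmbedding).card = T.card := Finset.card_map _

lemma Qgen_rename (r : Equiv.Perm (Fin (2 * s))) :
    (Qgen s).map (MvPolynomial.rename r : _ →ₐ[ℤ] _).toRingHom = Qgen s := by
  unfold Qgen
  rw [Polynomial.map_prod]
  refine (Fintype.prod_equiv (Equiv.finsetCongr r) _ _ fun T => ?_).trans rfl |>.symm.symm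
  simp only [Polynomial.map_pow, Polynomial.map_sub, Polynomial.map_one, Polynomial.map_mul,
    Polynomial.map_C, Polynomial.map_X, AlgHom.toRingHom_eq_coe, AlgHom.coe_toRingHom,
    rename_eGen, Equiv.finsetCongr_apply]

lemma Pgen_rename (r : Equiv.Perm (Fin (2 * s))) :
    (Pgen s).map (MvPolynomial.rename r : _ →ₐ[ℤ] _).toRingHom = Pgen s := by
  unfold Pgen
  rw [Polynomial.map_sum]
  refine (Fintype.sum_equiv (Equiv.finsetCongr r) _ _ fun T => ?_)
  simp only [Polynomial.map_mul, Polynomial.map_C, Polynomial.map_X, Polynomial.map_prod,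
    Polynomial.map_pow, Polynomial.map_sub, Polynomial.map_one, AlgHom.toRingHom_eq_coe,
    AlgHom.coe_toRingHom, map_mul, MvPolynomial.rename_C, rename_eGen, Equiv.finsetCongr_apply,
    card_map_emb]
  rw [← map_erase_eq r T, Finset.prod_map]
  rfl

noncomputable def Qc (s : ℕ) (v : Fin (2 * s) → ℂ) : Polynomial ℂ :=
  ∏ T : Finset (Fin (2 * s)), (1 - Polynomial.C (∏ j ∈ T, v j) * Polynomial.X) ^ 2

noncomputable def Pc (s : ℕ) (v : Fin (2 * s) → ℂ) : Polynomial ℂ :=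
  ∑ T : Finset (Fin (2 * s)),
    Polynomial.C ((-1) ^ (2 * s - T.card) * ∏ j ∈ T, v j) * Polynomial.X *
      ∏ T' ∈ Finset.univ.erase T, (1 - Polynomial.C (∏ j ∈ T', v j) * Polynomial.X) ^ 2

variable {s : ℕ}

lemma aeval_eGen (v : Fin (2 * s) → ℂ) (T : Finset (Fin (2 * s))) :
    MvPolynomial.aeval v (eGen s T) = ∏ j ∈ T, v j := by
  unfold eGen; rw [map_prod]; simp

lemma Qgen_map (v : Fin (2 * s) → ℂ) :
    (Qgen s).map (MvPolynomial.aeval v : _ →ₐ[ℤ] ℂ).toRingHom = Qc s v := by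
  unfold Qgen Qc
  rw [Polynomial.map_prod]
  refine Finset.prod_congr rfl fun T _ => ?_
  simp [aeval_eGen]

lemma Pgen_map (v : Fin (2 * s) → ℂ) :
    (Pgen s).map (MvPolynomial.aeval v : _ →ₐ[ℤ] ℂ).toRingHom = Pc s v := by
  unfold Pgen Pc
  rw [Polynomial.map_sum]
  refine Finset.sum_congr rfl fun T _ => ?_
  rw [Polynomial.map_mul, Polynomial.map_mul, Polynomial.map_C, Polynomial.map_X,
    Polynomial.map_prod]
  congr 1
  · congr 1
    rw [AlgHom.toRingHom_eq_coe, AlgHom.coe_toRingHom, map_mul, aeval_eGen]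
    congr 1
    rw [MvPolynomial.aeval_C]
    push_cast
    ring
  · refine Finset.prod_congr rfl fun T' _ => ?_
    simp [aeval_eGen]

open PowerSeries in
lemma aux_mul_one_sub (α : ℂ) (f : PowerSeries ℂ) (n : ℕ) :
    (PowerSeries.coeff n) (f * (1 - PowerSeries.C α * PowerSeries.X)) =
      (PowerSeries.coeff n) f - α * (if n = 0 then 0 else (PowerSeries.coeff (n-1)) f) := by
  have : f * (1 - PowerSeries.C α * PowerSeries.X)
      = f - PowerSeries.C α * (f * PowerSeries.X) := by ring
  rw [this, map_sub, PowerSeries.coeff_C_mul]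
  cases n with
  | zero => simp
  | succ m => simp [PowerSeries.coeff_succ_mul_X]

open PowerSeries in
lemma aux_D (α : ℂ) :
    (PowerSeries.mk fun n => (n : ℂ) * α ^ n) * (1 - PowerSeries.C α * PowerSeries.X) ^ 2 =
      PowerSeries.C α * PowerSeries.X := by
  have s1 : (PowerSeries.mk fun n => (n : ℂ) * α ^ n) * (1 - PowerSeries.C α * PowerSeries.X) =
      PowerSeries.mk fun n => if n = 0 then 0 else α ^ n := by
    ext n
    rw [aux_mul_one_sub]
    cases n with
    | zero => simp
    | succ m =>
      simp only [PowerSeries.coeff_mk, Nat.succ_ne_zero, if_false, Nat.add_sub_cancel]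
      push_cast
      ring
  have s2 : (PowerSeries.mk fun n => if n = 0 then (0:ℂ) else α ^ n) *
      (1 - PowerSeries.C α * PowerSeries.X) = PowerSeries.C α * PowerSeries.X := by
    ext n
    rw [aux_mul_one_sub]
    cases n with
    | zero => simp
    | succ m =>
      cases m with
      | zero => simp
      | succ k =>
        simp only [PowerSeries.coeff_mk, Nat.succ_ne_zero, if_false, Nat.add_sub_cancel,
          PowerSeries.coeff_C_mul, PowerSeries.coeff_X]
        simp [pow_succ]
        ring
  rw [sq, ← mul_assoc, s1, s2]

lemma F_expand (s : ℕ) (v : Fin (2 * s) → ℂ) :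
    (PowerSeries.mk fun n => (n : ℂ) * ∏ j : Fin (2 * s), (v j ^ n - 1)) =
      ∑ T : Finset (Fin (2 * s)), PowerSeries.C ((-1) ^ (2 * s - T.card)) *
        PowerSeries.mk (fun n => (n : ℂ) * (∏ j ∈ T, v j) ^ n) := by
  ext n
  rw [map_sum]
  simp only [PowerSeries.coeff_C_mul, PowerSeries.coeff_mk]
  have hexp : (∏ j : Fin (2 * s), (v j ^ n - 1)) =
      ∑ T : Finset (Fin (2 * s)), (-1 : ℂ) ^ (2 * s - T.card) * (∏ j ∈ T, v j) ^ n := by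
    have : ∀ j : Fin (2 * s), v j ^ n - 1 = v j ^ n + (-1) := by intro j; ring
    rw [Finset.prod_congr rfl fun j _ => this j, Finset.prod_add, Finset.powerset_univ]
    refine Finset.sum_congr rfl fun T _ => ?_
    rw [Finset.prod_const, Finset.card_sdiff_of_subset (Finset.subset_univ T), Finset.card_univ,
      Fintype.card_fin, Finset.prod_pow]
    ring
  rw [hexp, Finset.mul_sum]
  refine Finset.sum_congr rfl fun T _ => ?_
  ring

lemma ps_identity (s : ℕ) (v : Fin (2 * s) → ℂ) :
    (PowerSeries.mk fun n => (n : ℂ) * ∏ j : Fin (2 * s), (v j ^ n - 1)) *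
      ((Qc s v : Polynomial ℂ) : PowerSeries ℂ) = ((Pc s v : Polynomial ℂ) : PowerSeries ℂ) := by
  classical
  set α : Finset (Fin (2 * s)) → ℂ := fun T => ∏ j ∈ T, v j with hα
  have hQcoe : ((Qc s v : Polynomial ℂ) : PowerSeries ℂ) =
      ∏ T : Finset (Fin (2 * s)), (1 - PowerSeries.C (α T) * PowerSeries.X) ^ 2 := by
    unfold Qc
    rw [← Polynomial.coeToPowerSeries.ringHom_apply, map_prod]
    refine Finset.prod_congr rfl fun T _ => ?_
    simp only [Polynomial.coeToPowerSeries.ringHom_apply, Polynomial.coe_pow,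
      Polynomial.coe_sub, Polynomial.coe_one, Polynomial.coe_mul, Polynomial.coe_C,
      Polynomial.coe_X]
    rfl
  have hPcoe : ((Pc s v : Polynomial ℂ) : PowerSeries ℂ) =
      ∑ T : Finset (Fin (2 * s)), PowerSeries.C ((-1) ^ (2 * s - T.card) * α T) *
        PowerSeries.X *
        ∏ T' ∈ Finset.univ.erase T, (1 - PowerSeries.C (α T') * PowerSeries.X) ^ 2 := by
    unfold Pc
    rw [← Polynomial.coeToPowerSeries.ringHom_apply, map_sum]
    refine Finset.sum_congr rfl fun T _ => ?_
    rw [map_mul, map_mul, map_prod]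
    simp only [Polynomial.coeToPowerSeries.ringHom_apply, Polynomial.coe_pow,
      Polynomial.coe_sub, Polynomial.coe_one, Polynomial.coe_mul, Polynomial.coe_C,
      Polynomial.coe_X]
    rfl
  rw [F_expand s v, hQcoe, hPcoe, Finset.sum_mul]
  refine Finset.sum_congr rfl fun T _ => ?_
  rw [← Finset.mul_prod_erase Finset.univ _ (Finset.mem_univ T)]
  rw [mul_assoc, ← mul_assoc (PowerSeries.mk _), aux_D (α T), map_mul]
  ring

variable {s : ℕ}

lemma Qc_eval (v : Fin (2 * s) → ℂ) (y : ℂ) :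
    (Qc s v).eval y = ∏ T : Finset (Fin (2 * s)), (1 - (∏ j ∈ T, v j) * y) ^ 2 := by
  unfold Qc
  rw [Polynomial.eval_prod]
  simp [Polynomial.eval_prod]

lemma Pc_eval (v : Fin (2 * s) → ℂ) (y : ℂ) :
    (Pc s v).eval y = ∑ T : Finset (Fin (2 * s)),
      (-1) ^ (2 * s - T.card) * (∏ j ∈ T, v j) * y *
        ∏ T' ∈ Finset.univ.erase T, (1 - (∏ j ∈ T', v j) * y) ^ 2 := by
  unfold Pc
  rw [Polynomial.eval_finset_sum]
  refine Finset.sum_congr rfl fun T _ => ?_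
  rw [Polynomial.eval_mul, Polynomial.eval_mul, Polynomial.eval_C, Polynomial.eval_X,
    Polynomial.eval_prod]
  simp [Polynomial.eval_prod, mul_assoc]

lemma Qc_ne_zero (v : Fin (2 * s) → ℂ) : Qc s v ≠ 0 := by
  unfold Qc
  rw [Finset.prod_ne_zero_iff]
  intro T _
  apply pow_ne_zero
  intro h
  have := congrArg (Polynomial.eval 0) h
  simp at this

lemma good_eq (v : Fin (2 * s) → ℂ) (x : ℂ) (hx : x ≠ 0)
    (hQx : (Qc s v).eval x ≠ 0) (hQxi : (Qc s v).eval x⁻¹ ≠ 0)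
    (hv0 : ∀ j, v j ≠ 0) (ρ : Equiv.Perm (Fin (2 * s))) (hρ : ∀ j, v (ρ j) = (v j)⁻¹) :
    (Pc s v).eval x * (Qc s v).eval x⁻¹ = (Pc s v).eval x⁻¹ * (Qc s v).eval x := by
  classical
  set α : Finset (Fin (2 * s)) → ℂ := fun T => ∏ j ∈ T, v j with hα
  have hα0 : ∀ T, α T ≠ 0 := fun T => Finset.prod_ne_zero_iff.mpr fun j _ => hv0 j
  have hαρ : ∀ T, α (T.map ρ.toEmbedding) = (α T)⁻¹ := by
    intro T
    rw [hα]
    simp only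
    rw [Finset.prod_map]
    simp only [Equiv.coe_toEmbedding, hρ]
    rw [← Finset.prod_inv_distrib]
  have hfx : ∀ T, 1 - α T * x ≠ 0 := by
    intro T
    intro h
    apply hQx
    rw [Qc_eval]
    refine Finset.prod_eq_zero (Finset.mem_univ T) ?_
    show (1 - α T * x) ^ 2 = 0
    rw [h]; ring
  have hfxi : ∀ T, 1 - α T * x⁻¹ ≠ 0 := by
    intro T
    intro h
    apply hQxi
    rw [Qc_eval]
    refine Finset.prod_eq_zero (Finset.mem_univ T) ?_
    show (1 - α T * x⁻¹) ^ 2 = 0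
    rw [h]; ring
  set g : ℂ → ℂ := fun y => ∑ T : Finset (Fin (2 * s)),
    (-1) ^ (2 * s - T.card) * (α T * y) / (1 - α T * y) ^ 2 with hg
  have hPQ : ∀ y : ℂ, (∀ T, 1 - α T * y ≠ 0) →
      (Pc s v).eval y = (Qc s v).eval y * g y := by
    intro y hfy
    rw [Pc_eval, Qc_eval, hg]
    simp only
    rw [Finset.mul_sum]
    refine Finset.sum_congr rfl fun T _ => ?_
    rw [← Finset.mul_prod_erase Finset.univ (fun T' => (1 - α T' * y) ^ 2) (Finset.mem_univ T)]
    have h2 : (1 - α T * y) ^ 2 ≠ 0 := pow_ne_zero _ (hfy T)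
    rw [mul_div_assoc', eq_div_iff h2]
    ring
  have hgsym : g x⁻¹ = g x := by
    rw [hg]
    simp only
    refine Fintype.sum_equiv (Equiv.finsetCongr ρ) _ _ fun T => ?_
    simp only [Equiv.finsetCongr_apply]
    rw [hαρ, Finset.card_map]
    have ha := hα0 T
    have h1 := hfxi T
    have h2 : 1 - (α T)⁻¹ * x ≠ 0 := by
      have := hfx (T.map ρ.toEmbedding)
      rwa [hαρ] at this
    rw [div_eq_div_iff (pow_ne_zero 2 h1) (pow_ne_zero 2 h2)]
    field_simp
    ring
  rw [hPQ x hfx, hPQ x⁻¹ hfxi, hgsym]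
  ring

lemma eval_reflect_aux (f : Polynomial ℂ) (N : ℕ) (hf : f.natDegree ≤ N) (x : ℂ) (hx : x ≠ 0) :
    (f.reflect N).eval x = x ^ N * f.eval x⁻¹ := by
  have hxi : x⁻¹ ≠ 0 := inv_ne_zero hx
  letI : Invertible x⁻¹ := invertibleOfNonzero hxi
  have h := Polynomial.eval₂_reflect_mul_pow (RingHom.id ℂ) x⁻¹ N f hf
  rw [invOf_eq_inv, inv_inv] at h
  rw [show Polynomial.eval₂ (RingHom.id ℂ) x (f.reflect N) = (f.reflect N).eval x from rfl,
    show Polynomial.eval₂ (RingHom.id ℂ) x⁻¹ f = f.eval x⁻¹ from rfl] at h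
  have hxN : (x⁻¹ : ℂ) ^ N ≠ 0 := pow_ne_zero _ hxi
  field_simp at h ⊢
  rw [← h, one_div, inv_pow, mul_assoc, inv_mul_cancel₀ (pow_ne_zero _ hx), mul_one]

lemma Qc_eval_zero (v : Fin (2 * s) → ℂ) : (Qc s v).eval 0 = 1 := by
  rw [Qc_eval]; simp

lemma sym_all (v : Fin (2 * s) → ℂ) (hv0 : ∀ j, v j ≠ 0)
    (ρ : Equiv.Perm (Fin (2 * s))) (hρ : ∀ j, v (ρ j) = (v j)⁻¹) :
    ∀ x : ℂ, x ≠ 0 →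
      (Pc s v).eval x * (Qc s v).eval x⁻¹ = (Pc s v).eval x⁻¹ * (Qc s v).eval x := by
  classical
  set N := max (Pc s v).natDegree (Qc s v).natDegree with hN
  set W1 := Pc s v * (Qc s v).reflect N with hW1
  set W2 := (Pc s v).reflect N * Qc s v with hW2
  have hrootsfin : {x : ℂ | (Qc s v).eval x = 0}.Finite := by
    exact Polynomial.finite_setOf_isRoot (Qc_ne_zero v)
  have hrootsfin2 : {x : ℂ | (Qc s v).eval x⁻¹ = 0}.Finite := by
    apply Set.Finite.subset (hrootsfin.image Inv.inv)
    intro x hx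
    have hx0 : x ≠ 0 := by
      intro h; rw [h] at hx; simp only [Set.mem_setOf_eq, inv_zero] at hx
      rw [Qc_eval_zero] at hx; exact one_ne_zero hx
    exact ⟨x⁻¹, hx, inv_inv x⟩
  have hbadfin : ({(0 : ℂ)} ∪ ({x : ℂ | (Qc s v).eval x = 0} ∪
      {x : ℂ | (Qc s v).eval x⁻¹ = 0})).Finite :=
    (Set.finite_singleton 0).union (hrootsfin.union hrootsfin2)
  have hWeq : W1 = W2 := by
    apply Polynomial.eq_of_infinite_eval_eq
    refine Set.Infinite.mono ?_ hbadfin.infinite_compl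
    intro x hx
    simp only [Set.compl_union, Set.mem_inter_iff, Set.mem_compl_iff, Set.mem_singleton_iff,
      Set.mem_setOf_eq] at hx
    obtain ⟨hx0, hQx, hQxi⟩ := hx
    have hkey := good_eq v x hx0 hQx hQxi hv0 ρ hρ
    simp only [Set.mem_setOf_eq, hW1, hW2, Polynomial.eval_mul]
    rw [eval_reflect_aux _ N (le_max_right _ _) x hx0,
      eval_reflect_aux _ N (le_max_left _ _) x hx0]
    linear_combination x ^ N * hkey
  intro x hx0
  have h := congrArg (Polynomial.eval x) hWeq
  rw [hW1, hW2, Polynomial.eval_mul, Polynomial.eval_mul,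
    eval_reflect_aux _ N (le_max_right _ _) x hx0,
    eval_reflect_aux _ N (le_max_left _ _) x hx0] at h
  have hxN : x ^ N ≠ 0 := pow_ne_zero _ hx0
  apply mul_left_cancel₀ hxN
  calc x ^ N * ((Pc s v).eval x * (Qc s v).eval x⁻¹)
      = (Pc s v).eval x * (x ^ N * (Qc s v).eval x⁻¹) := by ring
    _ = x ^ N * (Pc s v).eval x⁻¹ * (Qc s v).eval x := h
    _ = x ^ N * ((Pc s v).eval x⁻¹ * (Qc s v).eval x) := by ring


theorem generating_function_rational_invariant (s : ℕ) (R : Polynomial ℤ)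
    (hmonic : R.Monic) (hdeg : R.natDegree = 2 * s) (h0 : R.coeff 0 = 1)
    (hone : R.eval 1 ≠ 0)
    (ξ : Fin (2 * s) → ℂ)
    (hroots : R.map (Int.castRingHom ℂ) =
      ∏ j : Fin (2 * s), (Polynomial.X - Polynomial.C (ξ j)))
    (hpair : ∀ j : Fin s, ξ ⟨(j : ℕ) + s, by omega⟩ = (ξ ⟨(j : ℕ), by omega⟩)⁻¹) :
    ∃ P Q : Polynomial ℤ, Q ≠ 0 ∧
      (PowerSeries.mk fun n => (n : ℂ) * ∏ j : Fin (2 * s), (ξ j ^ n - 1)) *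
          ((Q.map (Int.castRingHom ℂ)) : PowerSeries ℂ) =
        ((P.map (Int.castRingHom ℂ)) : PowerSeries ℂ) ∧
      ∀ x : ℂ, x ≠ 0 →
        (P.map (Int.castRingHom ℂ)).eval x * (Q.map (Int.castRingHom ℂ)).eval x⁻¹ =
          (P.map (Int.castRingHom ℂ)).eval x⁻¹ * (Q.map (Int.castRingHom ℂ)).eval x := by
  classical
  -- all roots are nonzero
  have hc0 : (∏ j : Fin (2 * s), (-ξ j)) = 1 := by
    have h := congrArg (Polynomial.eval 0) hroots
    rw [Polynomial.eval_prod] at h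
    simp only [Polynomial.eval_sub, Polynomial.eval_X, Polynomial.eval_C, zero_sub] at h
    rw [← h, ← Polynomial.coeff_zero_eq_eval_zero, Polynomial.coeff_map, h0]
    simp
  have hξ0 : ∀ j, ξ j ≠ 0 := by
    intro j hj
    rw [Finset.prod_eq_zero (Finset.mem_univ j) (by rw [hj]; ring)] at hc0
    exact zero_ne_one hc0
  -- the inversion permutation
  have hinvol : Function.Involutive (fun j : Fin (2 * s) =>
      if h : (j : ℕ) < s then (⟨(j : ℕ) + s, by omega⟩ : Fin (2 * s))
      else ⟨(j : ℕ) - s, by omega⟩) := by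
    intro j
    dsimp only
    by_cases h : (j : ℕ) < s
    · rw [dif_pos h]
      have h2 : ¬ (((⟨(j : ℕ) + s, by omega⟩ : Fin (2 * s)) : ℕ) < s) := by
        simp only [Fin.val_mk]; omega
      rw [dif_neg h2]
      apply Fin.ext
      simp only [Fin.val_mk]
      omega
    · rw [dif_neg h]
      have hj : (j : ℕ) < 2 * s := j.isLt
      have h2 : ((⟨(j : ℕ) - s, by omega⟩ : Fin (2 * s)) : ℕ) < s := by
        simp only [Fin.val_mk]; omega
      rw [dif_pos h2]
      apply Fin.ext
      simp only [Fin.val_mk]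
      omega
  set ρ : Equiv.Perm (Fin (2 * s)) := hinvol.toPerm _ with hρdef
  have hρ : ∀ j, ξ (ρ j) = (ξ j)⁻¹ := by
    intro j
    by_cases h : (j : ℕ) < s
    · have : ρ j = ⟨(j : ℕ) + s, by omega⟩ := by
        simp only [hρdef, Function.Involutive.coe_toPerm, h, dif_pos]
      rw [this]
      have := hpair ⟨(j : ℕ), h⟩
      simpa using this
    · have hj : (j : ℕ) < 2 * s := j.isLt
      have h2 : (j : ℕ) - s < s := by omega
      have : ρ j = ⟨(j : ℕ) - s, by omega⟩ := by
        simp only [hρdef, Function.Involutive.coe_toPerm]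
        rw [dif_neg h]
      rw [this]
      have hp := hpair ⟨(j : ℕ) - s, h2⟩
      simp only at hp
      have hjeq : (⟨(j : ℕ) - s + s, by omega⟩ : Fin (2 * s)) = j := by
        apply Fin.ext; simp; omega
      rw [hjeq] at hp
      rw [hp, inv_inv]
  -- lifting the complex polynomials to integer polynomials
  have hQsym : ∀ k, ((Qgen s).coeff k).IsSymmetric := by
    intro k r
    have h := Qgen_rename r
    calc MvPolynomial.rename r ((Qgen s).coeff k)
        = ((Qgen s).map (MvPolynomial.rename r : _ →ₐ[ℤ] _).toRingHom).coeff k := by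
          rw [Polynomial.coeff_map]; rfl
      _ = (Qgen s).coeff k := by rw [h]
  have hPsym : ∀ k, ((Pgen s).coeff k).IsSymmetric := by
    intro k r
    have h := Pgen_rename r
    calc MvPolynomial.rename r ((Pgen s).coeff k)
        = ((Pgen s).map (MvPolynomial.rename r : _ →ₐ[ℤ] _).toRingHom).coeff k := by
          rw [Polynomial.coeff_map]; rfl
      _ = (Pgen s).coeff k := by rw [h]
  have hQlift : Qc s ξ ∈ Polynomial.lifts (Int.castRingHom ℂ) := by
    rw [Polynomial.lifts_iff_coeff_lifts]
    intro n
    have hcoeff : (Qc s ξ).coeff n = (MvPolynomial.aeval ξ) ((Qgen s).coeff n) := by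
      rw [← Qgen_map ξ, Polynomial.coeff_map]; rfl
    rw [hcoeff]
    obtain ⟨z, hz⟩ := sym_int s R hdeg ξ hroots _ (hQsym n)
    exact ⟨z, by simpa using hz⟩
  have hPlift : Pc s ξ ∈ Polynomial.lifts (Int.castRingHom ℂ) := by
    rw [Polynomial.lifts_iff_coeff_lifts]
    intro n
    have hcoeff : (Pc s ξ).coeff n = (MvPolynomial.aeval ξ) ((Pgen s).coeff n) := by
      rw [← Pgen_map ξ, Polynomial.coeff_map]; rfl
    rw [hcoeff]
    obtain ⟨z, hz⟩ := sym_int s R hdeg ξ hroots _ (hPsym n)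
    exact ⟨z, by simpa using hz⟩
  obtain ⟨Q, hQ⟩ := (Polynomial.mem_lifts _).mp hQlift
  obtain ⟨P, hP⟩ := (Polynomial.mem_lifts _).mp hPlift
  refine ⟨P, Q, ?_, ?_, ?_⟩
  · intro h
    rw [h, Polynomial.map_zero] at hQ
    exact Qc_ne_zero ξ hQ.symm
  · rw [hQ, hP]
    exact ps_identity s ξ
  · intro x hx
    rw [hQ, hP]
    exact sym_all ξ hξ0 ρ hρ x hx
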